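/- Fix σ > 0 and z ∈ ℝ, and let T ⊆ ℝ be a Lebesgue-measurable set such that both T ∩ (−∞, z] and T ∩ (z, ∞) have positive Lebesgue measure. Then the map μ ↦ F_TN(z; μ, σ², T) is strictly decreasing on ℝ. -/

import Mathlib

open MeasureTheory

/-- The truncated normal CDF: `F_TN(z; μ, σ², T)` is the Gaussian weight of `T ∩ (-∞, z]`
divided by the Gaussian weight of `T` (with value 0 when the denominator vanishes, matching
the Lean convention `x / 0 = 0`). -/
noncomputable def FTN (z μ σ2 : ℝ) (T : Set ℝ) : ℝ :=
  (∫ t in T ∩ Set.Iic z, Real.exp (-(t - μ) ^ 2 / (2 * σ2))) /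
    (∫ t in T, Real.exp (-(t - μ) ^ 2 / (2 * σ2)))

lemma gauss_integrable (σ2 μ : ℝ) (hσ2 : 0 < σ2) :
    Integrable (fun t : ℝ => Real.exp (-(t - μ) ^ 2 / (2 * σ2))) := by
  have h := (integrable_exp_neg_mul_sq (b := 1 / (2 * σ2)) (by positivity)).comp_sub_right μ
  convert h using 2 with t
  ring_nf

lemma gauss_setIntegral_pos (σ2 μ : ℝ) (hσ2 : 0 < σ2) (S : Set ℝ)
    (hS : MeasurableSet S) (hpos : 0 < volume S) :
    0 < ∫ t in S, Real.exp (-(t - μ) ^ 2 / (2 * σ2)) := by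
  rw [setIntegral_pos_iff_support_of_nonneg_ae
      (Filter.Eventually.of_forall fun t => (Real.exp_pos _).le)
      ((gauss_integrable σ2 μ hσ2).integrableOn)]
  have hsupp : (Function.support fun t : ℝ => Real.exp (-(t - μ) ^ 2 / (2 * σ2))) = Set.univ := by
    ext t; simp [Function.mem_support, (Real.exp_pos _).ne']
  rwa [hsupp, Set.univ_inter]

/-- if both `T ∩ (-∞, z]` and `T ∩ (z, ∞)` have positive Lebesgue measure,
then `μ ↦ F_TN(z; μ, σ², T)` is strictly decreasing on `ℝ`. -/
theorem stmt6 (σ : ℝ) (hσ : 0 < σ) (z : ℝ) (T : Set ℝ) (hT : MeasurableSet T)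
    (h1 : 0 < volume (T ∩ Set.Iic z))
    (h2 : 0 < volume (T ∩ Set.Ioi z)) :
    StrictAnti (fun μ : ℝ => FTN z μ (σ ^ 2) T) := by
  set σ2 : ℝ := σ ^ 2 with hσ2def
  have hσ2 : 0 < σ2 := by positivity
  set g : ℝ → ℝ → ℝ := fun μ t => Real.exp (-(t - μ) ^ 2 / (2 * σ2)) with hg
  set S : Set ℝ := T ∩ Set.Iic z with hSdef
  set U : Set ℝ := T ∩ Set.Ioi z with hUdef
  have hS : MeasurableSet S := hT.inter measurableSet_Iic
  have hU : MeasurableSet U := hT.inter measurableSet_Ioi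
  have hTSU : T = S ∪ U := by
    rw [hSdef, hUdef, ← Set.inter_union_distrib_left, Set.Iic_union_Ioi, Set.inter_univ]
  have hdisj : Disjoint S U :=
    (Set.Iic_disjoint_Ioi le_rfl).mono Set.inter_subset_right Set.inter_subset_right
  -- The denominator splits as A + B.
  have hsplit : ∀ μ, ∫ t in T, g μ t = (∫ t in S, g μ t) + ∫ t in U, g μ t := by
    intro μ
    rw [hTSU]
    exact setIntegral_union hdisj hU ((gauss_integrable σ2 μ hσ2).integrableOn)
      ((gauss_integrable σ2 μ hσ2).integrableOn)
  intro μ1 μ2 hlt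
  set A1 : ℝ := ∫ t in S, g μ1 t
  set A2 : ℝ := ∫ t in S, g μ2 t
  set B1 : ℝ := ∫ t in U, g μ1 t
  set B2 : ℝ := ∫ t in U, g μ2 t
  have hA1 : 0 < A1 := gauss_setIntegral_pos σ2 μ1 hσ2 S hS h1
  have hA2 : 0 < A2 := gauss_setIntegral_pos σ2 μ2 hσ2 S hS h1
  have hB1 : 0 < B1 := gauss_setIntegral_pos σ2 μ1 hσ2 U hU h2
  have hB2 : 0 < B2 := gauss_setIntegral_pos σ2 μ2 hσ2 U hU h2
  -- likelihood ratio at z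
  set r : ℝ := Real.exp ((μ2 - μ1) * (2 * z - μ1 - μ2) / (2 * σ2)) with hrdef
  have hr : 0 < r := Real.exp_pos _
  -- pointwise comparisons
  have hratio_le : ∀ t ≤ z, g μ2 t ≤ r * g μ1 t := by
    intro t ht
    rw [hrdef, hg, ← Real.exp_add, Real.exp_le_exp]
    rw [← add_div, div_le_div_iff₀ (by positivity) (by positivity)]
    nlinarith [mul_nonneg (mul_nonneg (sub_pos.mpr hlt).le (sub_nonneg.mpr ht)) hσ2.le]
  have hratio_lt : ∀ t, z < t → r * g μ1 t < g μ2 t := by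
    intro t ht
    rw [hrdef, hg, ← Real.exp_add, Real.exp_lt_exp]
    rw [← add_div, div_lt_div_iff₀ (by positivity) (by positivity)]
    nlinarith [mul_pos (mul_pos (sub_pos.mpr hlt) (sub_pos.mpr ht)) hσ2]
  -- A2 ≤ r * A1
  have hA : A2 ≤ r * A1 := by
    have hnn : 0 ≤ ∫ t in S, (r * g μ1 t - g μ2 t) := by
      refine setIntegral_nonneg hS fun t ht => ?_
      have := hratio_le t ht.2
      linarith
    have heq : (∫ t in S, (r * g μ1 t - g μ2 t)) = r * A1 - A2 := by
      rw [integral_sub (((gauss_integrable σ2 μ1 hσ2).integrableOn).const_mul r)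
        ((gauss_integrable σ2 μ2 hσ2).integrableOn), integral_const_mul r]
    linarith [heq ▸ hnn]
  -- r * B1 < B2
  have hB : r * B1 < B2 := by
    have hpos : 0 < ∫ t in U, (g μ2 t - r * g μ1 t) := by
      rw [setIntegral_pos_iff_support_of_nonneg_ae]
      · refine lt_of_lt_of_le h2 (measure_mono ?_)
        intro t ht
        refine ⟨?_, ht⟩
        have := hratio_lt t ht.2
        simp only [Function.mem_support]
        intro h
        rw [sub_eq_zero] at h
        linarith
      · filter_upwards [ae_restrict_mem hU] with t ht
        have := hratio_lt t ht.2
        simp only [Pi.zero_apply]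
        linarith
      · exact ((gauss_integrable σ2 μ2 hσ2).integrableOn).sub
          (((gauss_integrable σ2 μ1 hσ2).integrableOn).const_mul r)
    have heq : (∫ t in U, (g μ2 t - r * g μ1 t)) = B2 - r * B1 := by
      rw [integral_sub ((gauss_integrable σ2 μ2 hσ2).integrableOn)
        (((gauss_integrable σ2 μ1 hσ2).integrableOn).const_mul r), integral_const_mul r]
    linarith [heq ▸ hpos]
  have hkey : A2 * B1 < A1 * B2 := by nlinarith
  show FTN z μ2 σ2 T < FTN z μ1 σ2 T
  unfold FTN
  rw [show (∫ t in T, Real.exp (-(t - μ2) ^ 2 / (2 * σ2))) = A2 + B2 from hsplit μ2,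
      show (∫ t in T, Real.exp (-(t - μ1) ^ 2 / (2 * σ2))) = A1 + B1 from hsplit μ1]
  show A2 / (A2 + B2) < A1 / (A1 + B1)
  rw [div_lt_div_iff₀ (by linarith) (by linarith)]
  nlinarith
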